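/- arXiv:1809.07742 — 2 statements merged into one kernel-verified Lean document; each statement's English description precedes it below -/
import Mathlib

section
/- Let κ ∈ ℝ and q ∈ [0,1). For any y > κ there is a unique solution h ∈ ℝ to the equation h + (1−q) F_q(h) = y, i.e. h + √(1−q)·𝓔((κ−h)/√(1−q)) = y. Moreover the map L_q(h) = h + √(1−q)·𝓔((κ−h)/√(1−q)) is strictly increasing with 0 < L_q′(h) < 1 for all h ∈ ℝ, and maps ℝ onto the interval (κ,∞). -/
open MeasureTheory Real Set Filter

noncomputable section

/-- The standard gaussian density `φ(x) = exp(-x²/2)/√(2π)`. -/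
def gphi (x : ℝ) : ℝ := Real.exp (-x ^ 2 / 2) / Real.sqrt (2 * Real.pi)

/-- The complementary gaussian distribution function `Φ̄(x) = ∫_x^∞ φ(u) du`. -/
def Phibar (x : ℝ) : ℝ := ∫ u in Set.Ioi x, gphi u

/-- `𝓔(x) = φ(x) / Φ̄(x)`. -/
def gaussE (x : ℝ) : ℝ := gphi x / Phibar x

/-- `F_q(x) = 𝓔((κ - x)/√(1-q)) / √(1-q)` (with threshold `κ`). -/
def Fq (κ q x : ℝ) : ℝ := gaussE ((κ - x) / Real.sqrt (1 - q)) / Real.sqrt (1 - q)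

/-- `P(ψ) = ∫ tanh(√ψ z)² φ(z) dz`. -/
def Pfun (ψ : ℝ) : ℝ := ∫ z : ℝ, Real.tanh (Real.sqrt ψ * z) ^ 2 * gphi z

/-- `R_κ(q, α) = α ∫ F_q(√q z)² φ(z) dz`. -/
def Rfun (κ q α : ℝ) : ℝ := α * ∫ z : ℝ, Fq κ q (Real.sqrt q * z) ^ 2 * gphi z

/-- `𝒢_κ(α, q, ψ)`. -/
def Gfun (κ α q ψ : ℝ) : ℝ :=
  -(ψ * (1 - q)) / 2 + (∫ z : ℝ, Real.log (2 * Real.cosh (Real.sqrt ψ * z)) * gphi z)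
    + α * ∫ z : ℝ, Real.log (Phibar ((κ - Real.sqrt q * z) / Real.sqrt (1 - q))) * gphi z

def alphaLB : ℝ := 0.833078599
def alphaUB : ℝ := 0.833078600
def qLB : ℝ := 0.56394907949
def qLU : ℝ := 0.56394907950
def qUL : ℝ := 0.56394908029
def qUB : ℝ := 0.56394908030
def psiLB : ℝ := 2.5763513100
def psiLU : ℝ := 2.5763513103
def psiUL : ℝ := 2.5763513221
def psiUB : ℝ := 2.5763513224


lemma gphi_pos (x : ℝ) : 0 < gphi x :=
  div_pos (Real.exp_pos _) (Real.sqrt_pos.2 (by positivity))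

lemma gphi_continuous : Continuous gphi := by
  unfold gphi; fun_prop

lemma hasDerivAt_gphi (x : ℝ) : HasDerivAt gphi (-x * gphi x) x := by
  have h1 : HasDerivAt (fun x : ℝ => -x ^ 2 / 2) (-x) x := by
    have := ((hasDerivAt_pow 2 x).neg).div_const 2
    simpa using this.congr_deriv (by ring)
  have h2 := (h1.exp).div_const (Real.sqrt (2 * Real.pi))
  refine h2.congr_deriv ?_
  unfold gphi; ring

lemma gphi_integrable : Integrable gphi := by
  have : Integrable (fun x : ℝ => Real.exp (-(1/2) * x ^ 2)) := integrable_exp_neg_mul_sq (by norm_num)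
  have h2 := this.div_const (Real.sqrt (2 * Real.pi))
  refine h2.congr (Eventually.of_forall fun x => ?_)
  unfold gphi; ring_nf

lemma gphi_tendsto_atTop : Tendsto gphi atTop (nhds 0) := by
  have h1 : Tendsto (fun x : ℝ => -x ^ 2 / 2) atTop atBot := by
    apply Tendsto.atBot_div_const (by norm_num)
    exact tendsto_neg_atBot_iff.2 (tendsto_pow_atTop (by norm_num))
  have := (Real.tendsto_exp_atBot.comp h1).div_const (Real.sqrt (2 * Real.pi))
  rw [show (0:ℝ) = 0 / Real.sqrt (2 * Real.pi) by simp]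
  exact this

lemma Phibar_pos (x : ℝ) : 0 < Phibar x := by
  rw [Phibar]
  rw [setIntegral_pos_iff_support_of_nonneg_ae
    (Eventually.of_forall fun u => (gphi_pos u).le) gphi_integrable.integrableOn]
  have : Function.support gphi ∩ Ioi x = Ioi x := by
    rw [inter_eq_right]
    intro u _
    exact (gphi_pos u).ne'
  rw [this, Real.volume_Ioi]
  exact ENNReal.zero_lt_top

lemma neg_gphi_deriv (u : ℝ) : HasDerivAt (fun v => -gphi v) (u * gphi u) u := by
  exact (hasDerivAt_gphi u).neg.congr_deriv (by ring)

lemma neg_gphi_tendsto : Tendsto (fun v => -gphi v) atTop (nhds 0) := by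
  simpa using gphi_tendsto_atTop.neg

lemma integrableOn_id_mul_gphi {x : ℝ} (hx : 0 ≤ x) :
    IntegrableOn (fun u => u * gphi u) (Ioi x) := by
  refine integrableOn_Ioi_deriv_of_nonneg' (fun u _ => neg_gphi_deriv u)
    (fun u hu => ?_) neg_gphi_tendsto
  exact mul_nonneg (hx.trans (le_of_lt hu)) (gphi_pos u).le

lemma integral_id_mul_gphi {x : ℝ} (hx : 0 ≤ x) :
    ∫ u in Ioi x, u * gphi u = gphi x := by
  have := integral_Ioi_of_hasDerivAt_of_nonneg' (g := fun v => -gphi v)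
    (g' := fun u => u * gphi u) (fun u _ => neg_gphi_deriv u)
    (fun u hu => mul_nonneg (hx.trans (le_of_lt hu)) (gphi_pos u).le) neg_gphi_tendsto
  simpa using this

lemma mul_Phibar_lt (x : ℝ) : x * Phibar x < gphi x := by
  rcases le_or_gt x 0 with hx | hx
  · exact lt_of_le_of_lt (mul_nonpos_of_nonpos_of_nonneg hx (Phibar_pos x).le) (gphi_pos x)
  · have hint := integrableOn_id_mul_gphi hx.le
    have hint2 : IntegrableOn (fun u => x * gphi u) (Ioi x) :=
      (gphi_integrable.const_mul x).integrableOn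
    have hint3 : IntegrableOn (fun u => (u - x) * gphi u) (Ioi x) := by
      have : (fun u => (u - x) * gphi u) = (fun u => u * gphi u) - fun u => x * gphi u := by
        funext u; simp [sub_mul]
      rw [this]; exact hint.sub hint2
    have hpos : 0 < ∫ u in Ioi x, (u - x) * gphi u := by
      rw [setIntegral_pos_iff_support_of_nonneg_ae ?_ hint3]
      · have : Function.support (fun u => (u - x) * gphi u) ∩ Ioi x = Ioi x := by
          rw [inter_eq_right]
          intro u hu
          exact mul_ne_zero (sub_ne_zero.2 (ne_of_gt hu)) (gphi_pos u).ne'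
        rw [this, Real.volume_Ioi]
        exact ENNReal.zero_lt_top
      · rw [EventuallyLE, ae_restrict_iff' measurableSet_Ioi]
        exact Eventually.of_forall fun u hu =>
          mul_nonneg (sub_nonneg.2 (le_of_lt hu)) (gphi_pos u).le
    have heq : ∫ u in Ioi x, (u - x) * gphi u
        = (∫ u in Ioi x, u * gphi u) - ∫ u in Ioi x, x * gphi u := by
      rw [← integral_sub hint hint2]
      exact setIntegral_congr_fun measurableSet_Ioi fun u _ => by ring
    have h1 : ∫ u in Ioi x, x * gphi u = x * Phibar x := by
      rw [integral_const_mul]; rfl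
    have h2 := integral_id_mul_gphi hx.le
    rw [heq, h1, h2] at hpos
    linarith

lemma Phibar_le_div {x : ℝ} (hx : 0 < x) : Phibar x ≤ gphi x / x :=
  (le_div_iff₀ hx).2 (by linarith [mul_Phibar_lt x, mul_comm x (Phibar x)])

lemma Phibar_tendsto_zero : Tendsto Phibar atTop (nhds 0) := by
  apply squeeze_zero' (Eventually.of_forall fun x => (Phibar_pos x).le)
    ?_ gphi_tendsto_atTop
  filter_upwards [eventually_ge_atTop (1:ℝ)] with x hx
  calc Phibar x ≤ gphi x / x := Phibar_le_div (by linarith)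
    _ ≤ gphi x / 1 := by
        apply div_le_div_of_nonneg_left (gphi_pos x).le one_pos hx
    _ = gphi x := div_one _

lemma Phibar_split {a b : ℝ} (h : a ≤ b) :
    Phibar a = (∫ u in Ioc a b, gphi u) + Phibar b := by
  rw [Phibar, ← Ioc_union_Ioi_eq_Ioi h,
    setIntegral_union (Ioc_disjoint_Ioi le_rfl) measurableSet_Ioi
      gphi_integrable.integrableOn gphi_integrable.integrableOn]
  rfl

lemma Phibar_eq (x : ℝ) : Phibar x = Phibar 0 - ∫ t in (0:ℝ)..x, gphi t := by
  rcases le_total 0 x with h | h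
  · rw [intervalIntegral.integral_of_le h]
    have := Phibar_split h
    linarith
  · rw [intervalIntegral.integral_of_ge h]
    have := Phibar_split h
    linarith

lemma hasDerivAt_Phibar (x : ℝ) : HasDerivAt Phibar (-gphi x) x := by
  have h : HasDerivAt (fun y => ∫ t in (0:ℝ)..y, gphi t) (gphi x) x :=
    intervalIntegral.integral_hasDerivAt_right gphi_integrable.intervalIntegrable
      (gphi_continuous.stronglyMeasurableAtFilter _ _) gphi_continuous.continuousAt
  have heq : Phibar = fun y => Phibar 0 - ∫ t in (0:ℝ)..y, gphi t :=
    funext fun y => Phibar_eq y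
  rw [heq]
  exact ((hasDerivAt_const x (Phibar 0)).sub h).congr_deriv (by ring)

def mil (x : ℝ) : ℝ := (x + Real.sqrt (x ^ 2 + 4)) / 2

lemma mil_root_pos (x : ℝ) : 0 < Real.sqrt (x ^ 2 + 4) := Real.sqrt_pos.2 (by positivity)

lemma mil_root_sq (x : ℝ) : Real.sqrt (x ^ 2 + 4) ^ 2 = x ^ 2 + 4 :=
  Real.sq_sqrt (by positivity)

lemma abs_lt_mil_root (x : ℝ) : |x| < Real.sqrt (x ^ 2 + 4) := by
  have h := mil_root_sq x
  nlinarith [mil_root_pos x, abs_nonneg x, sq_abs x]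

lemma mil_pos (x : ℝ) : 0 < mil x := by
  have := abs_lt_mil_root x
  have := neg_abs_le x
  unfold mil; linarith

lemma mil_sq (x : ℝ) : mil x ^ 2 = x * mil x + 1 := by
  have h := mil_root_sq x
  unfold mil; nlinarith

lemma self_lt_mil (x : ℝ) : x < mil x := by
  have h1 := abs_lt_mil_root x
  have h2 := le_abs_self x
  unfold mil; linarith

lemma hasDerivAt_mil (x : ℝ) :
    HasDerivAt mil (mil x / Real.sqrt (x ^ 2 + 4)) x := by
  have hne : x ^ 2 + 4 ≠ 0 := by positivity
  have h1 : HasDerivAt (fun y : ℝ => y ^ 2 + 4) (2 * x) x := by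
    simpa using (hasDerivAt_pow 2 x).add_const 4
  have h2 : HasDerivAt (fun y : ℝ => Real.sqrt (y ^ 2 + 4))
      (1 / (2 * Real.sqrt (x ^ 2 + 4)) * (2 * x)) x :=
    (Real.hasDerivAt_sqrt hne).comp x h1
  have h3 := ((hasDerivAt_id x).add h2).div_const 2
  have hr := mil_root_pos x
  refine h3.congr_deriv ?_
  unfold mil
  field_simp
  ring

def Gmil (x : ℝ) : ℝ := Phibar x - gphi x / mil x

lemma hasDerivAt_Gmil (x : ℝ) :
    HasDerivAt Gmil (-gphi x -
      ((-x * gphi x) * mil x - gphi x * (mil x / Real.sqrt (x ^ 2 + 4))) / mil x ^ 2) x :=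
  (hasDerivAt_Phibar x).sub ((hasDerivAt_gphi x).div (hasDerivAt_mil x) (mil_pos x).ne')

lemma Gmil_deriv_neg (x : ℝ) :
    -gphi x - ((-x * gphi x) * mil x - gphi x * (mil x / Real.sqrt (x ^ 2 + 4))) / mil x ^ 2
      < 0 := by
  have hm := mil_pos x
  have hr := mil_root_pos x
  have hsq := mil_sq x
  have hφ := gphi_pos x
  -- mil x < sqrt (x^2+4)
  have hlt : mil x < Real.sqrt (x ^ 2 + 4) := by
    have := abs_lt_mil_root x
    have := le_abs_self x
    unfold mil at *; linarith
  rw [sub_neg, lt_div_iff₀ (by positivity), div_eq_mul_inv]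
  have hinv : mil x * (Real.sqrt (x ^ 2 + 4))⁻¹ < 1 := by
    rw [mul_inv_lt_iff₀ hr, one_mul]; exact hlt
  nlinarith [mul_pos hφ hm]

lemma Gmil_strictAnti : StrictAnti Gmil := by
  apply strictAnti_of_deriv_neg
  intro x
  rw [(hasDerivAt_Gmil x).deriv]
  exact Gmil_deriv_neg x

lemma Gmil_tendsto_zero : Tendsto Gmil atTop (nhds 0) := by
  have h2 : Tendsto (fun x => gphi x / mil x) atTop (nhds 0) := by
    apply squeeze_zero' (Eventually.of_forall fun x => (div_pos (gphi_pos x) (mil_pos x)).le) ?_ gphi_tendsto_atTop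
    filter_upwards [eventually_ge_atTop (0:ℝ)] with x hx
    have h1 : (1:ℝ) ≤ mil x := by
      have : Real.sqrt ((0:ℝ) ^ 2 + 4) ≤ Real.sqrt (x ^ 2 + 4) := by
        apply Real.sqrt_le_sqrt; nlinarith
      have h4 : Real.sqrt ((0:ℝ) ^ 2 + 4) = 2 := by
        rw [show (0:ℝ) ^ 2 + 4 = 2 ^ 2 by norm_num, Real.sqrt_sq (by norm_num)]
      unfold mil; rw [h4] at this; linarith
    calc gphi x / mil x ≤ gphi x / 1 :=
          div_le_div_of_nonneg_left (gphi_pos x).le one_pos h1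
      _ = gphi x := div_one _
  have := Phibar_tendsto_zero.sub h2
  rw [sub_zero] at this
  exact this

lemma Gmil_pos (x : ℝ) : 0 < Gmil x := by
  have hnn : ∀ y : ℝ, 0 ≤ Gmil y := by
    intro y
    apply le_of_tendsto Gmil_tendsto_zero
    filter_upwards [eventually_ge_atTop y] with z hz
    exact Gmil_strictAnti.antitone hz
  calc (0:ℝ) ≤ Gmil (x + 1) := hnn _
    _ < Gmil x := Gmil_strictAnti (by linarith)

lemma gphi_lt_mil_mul (x : ℝ) : gphi x < mil x * Phibar x := by
  have h := Gmil_pos x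
  unfold Gmil at h
  have hm := mil_pos x
  rw [sub_pos, div_lt_iff₀ hm] at h
  linarith [h]

lemma gaussE_pos (x : ℝ) : 0 < gaussE x := div_pos (gphi_pos x) (Phibar_pos x)

lemma lt_gaussE (x : ℝ) : x < gaussE x := by
  rw [gaussE, lt_div_iff₀ (Phibar_pos x)]; exact mul_Phibar_lt x

lemma gaussE_lt_mil (x : ℝ) : gaussE x < mil x := by
  rw [gaussE, div_lt_iff₀ (Phibar_pos x)]; exact gphi_lt_mil_mul x

lemma hasDerivAt_gaussE (x : ℝ) :
    HasDerivAt gaussE (gaussE x * (gaussE x - x)) x := by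
  have h := (hasDerivAt_gphi x).div (hasDerivAt_Phibar x) (Phibar_pos x).ne'
  refine h.congr_deriv ?_
  have hP : Phibar x ≠ 0 := (Phibar_pos x).ne'
  unfold gaussE
  field_simp
  ring

lemma gaussE_deriv_pos (x : ℝ) : 0 < gaussE x * (gaussE x - x) :=
  mul_pos (gaussE_pos x) (sub_pos.2 (lt_gaussE x))

lemma gaussE_deriv_lt_one (x : ℝ) : gaussE x * (gaussE x - x) < 1 := by
  have h1 := gaussE_lt_mil x
  have h2 := lt_gaussE x
  have h3 := mil_sq x
  have h4 := gaussE_pos x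
  nlinarith

lemma gaussE_sub_tendsto : Tendsto (fun x => gaussE x - x) atTop (nhds 0) := by
  apply squeeze_zero'
    (Eventually.of_forall fun x => sub_nonneg.2 (lt_gaussE x).le) ?_ tendsto_inv_atTop_zero
  filter_upwards [eventually_ge_atTop (1:ℝ)] with x hx
  have h1 : gaussE x - x ≤ mil x - x := by linarith [gaussE_lt_mil x]
  have h2 : mil x - x ≤ x⁻¹ := by
    have hr := mil_root_sq x
    have hr0 := mil_root_pos x
    have hx0 : (0:ℝ) < x := lt_of_lt_of_le one_pos hx
    have hinv : x * x⁻¹ = 1 := mul_inv_cancel₀ hx0.ne'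
    show (x + Real.sqrt (x ^ 2 + 4)) / 2 - x ≤ x⁻¹
    nlinarith [sq_nonneg (x * Real.sqrt (x ^ 2 + 4) - x ^ 2 - 2), mul_pos hx0 hr0,
      inv_pos.2 hx0]
  linarith


theorem Lq_strictMono_bijection' (κ q : ℝ) (hq : q ∈ Set.Ico (0 : ℝ) 1) :
    (∀ h : ℝ, h + (1 - q) * (gaussE ((κ - h) / Real.sqrt (1 - q)) / Real.sqrt (1 - q))
        = h + Real.sqrt (1 - q) * gaussE ((κ - h) / Real.sqrt (1 - q))) ∧
    (∀ y : ℝ, κ < y →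
      ∃! h : ℝ, h + (1 - q) * (gaussE ((κ - h) / Real.sqrt (1 - q)) / Real.sqrt (1 - q)) = y) ∧
    StrictMono (fun h : ℝ => h + Real.sqrt (1 - q) * gaussE ((κ - h) / Real.sqrt (1 - q))) ∧
    (∀ h : ℝ,
      deriv (fun h' : ℝ => h' + Real.sqrt (1 - q) * gaussE ((κ - h') / Real.sqrt (1 - q))) h
        ∈ Set.Ioo (0 : ℝ) 1) ∧
    Set.range (fun h : ℝ => h + Real.sqrt (1 - q) * gaussE ((κ - h) / Real.sqrt (1 - q)))
      = Set.Ioi κ := by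
  obtain ⟨hq0, hq1⟩ := hq
  set s := Real.sqrt (1 - q) with hs_def
  have hs : 0 < s := Real.sqrt_pos.2 (by linarith)
  have hs2 : s ^ 2 = 1 - q := Real.sq_sqrt (by linarith)
  set L := fun h : ℝ => h + s * gaussE ((κ - h) / s) with hLdef
  have stmt1 : ∀ h : ℝ, h + (1 - q) * (gaussE ((κ - h) / s) / s) = L h := by
    intro h
    rw [hLdef, ← hs2]
    field_simp
  have hderiv : ∀ h : ℝ, HasDerivAt L
      (1 - gaussE ((κ - h) / s) * (gaussE ((κ - h) / s) - (κ - h) / s)) h := by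
    intro h
    have hi : HasDerivAt (fun h' : ℝ => (κ - h') / s) (-1 / s) h := by
      simpa using ((hasDerivAt_id h).const_sub κ).div_const s
    have hE := (hasDerivAt_gaussE ((κ - h) / s)).comp h hi
    have hsum := (hasDerivAt_id h).add (hE.const_mul s)
    rw [hLdef]
    refine hsum.congr_deriv ?_
    field_simp
    ring
  have hd_mem : ∀ h : ℝ, deriv L h ∈ Set.Ioo (0:ℝ) 1 := by
    intro h
    rw [(hderiv h).deriv]
    exact ⟨by linarith [gaussE_deriv_lt_one ((κ - h) / s)],
      by linarith [gaussE_deriv_pos ((κ - h) / s)]⟩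
  have hmono : StrictMono L := strictMono_of_deriv_pos fun h => (hd_mem h).1
  have hLgt : ∀ h : ℝ, κ < L h := by
    intro h
    have h1 : s * ((κ - h) / s) = κ - h := mul_div_cancel₀ _ hs.ne'
    have h2 := lt_gaussE ((κ - h) / s)
    have h3 := mul_lt_mul_of_pos_left h2 hs
    rw [hLdef]
    simp only []
    rw [h1] at h3
    linarith
  have hcont : Continuous L :=
    continuous_iff_continuousAt.2 fun h => (hderiv h).differentiableAt.continuousAt
  have htop : Tendsto L atTop atTop := by
    apply tendsto_atTop_mono (fun h : ℝ => ?_) tendsto_id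
    have := mul_pos hs (gaussE_pos ((κ - h) / s))
    show (h : ℝ) ≤ h + s * gaussE ((κ - h) / s)
    linarith
  have hbot : Tendsto L atBot (nhds κ) := by
    have hu : Tendsto (fun h : ℝ => (κ - h) / s) atBot atTop := by
      apply Tendsto.atTop_div_const hs
      exact (tendsto_atTop_add_const_left atBot κ tendsto_neg_atBot_atTop).congr fun h => by ring
    have h0 := gaussE_sub_tendsto.comp hu
    have hLeq : L = fun h : ℝ =>
        κ + s * (gaussE ((κ - h) / s) - (κ - h) / s) := by
      funext h
      rw [hLdef]
      have h1 : s * ((κ - h) / s) = κ - h := mul_div_cancel₀ _ hs.ne'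
      simp only []
      rw [mul_sub, h1]
      ring
    rw [hLeq]
    simpa using ((h0.const_mul s).const_add κ)
  have hrange : Set.range L = Set.Ioi κ := by
    apply Set.Subset.antisymm
    · rintro _ ⟨h, rfl⟩
      exact hLgt h
    · intro y hy
      obtain ⟨a, ha⟩ := (hbot.eventually_lt_const hy).exists
      obtain ⟨b, hb⟩ := (htop.eventually_gt_atTop y).exists
      have hab : a < b := hmono.lt_iff_lt.1 (ha.trans hb)
      obtain ⟨h, _, hh⟩ := intermediate_value_Ioo hab.le hcont.continuousOn ⟨ha, hb⟩
      exact ⟨h, hh⟩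
  refine ⟨stmt1, ?_, hmono, hd_mem, hrange⟩
  intro y hy
  have hex : ∃ h : ℝ, L h = y := by
    have : y ∈ Set.range L := hrange ▸ hy
    exact this
  obtain ⟨h, hh⟩ := hex
  refine ⟨h, ?_, fun h' hh' => ?_⟩
  · show h + (1 - q) * (gaussE ((κ - h) / s) / s) = y
    rw [stmt1 h]; exact hh
  · have hh2 : h' + (1 - q) * (gaussE ((κ - h') / s) / s) = y := hh'
    apply hmono.injective
    rw [hh, ← stmt1 h', hh2]


/-- Lemma 2.4. For `q ∈ [0,1)` and any `y > κ` there is a unique `h ∈ ℝ`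
with `h + (1-q) F_q(h) = y`, i.e. `h + √(1-q) 𝓔((κ-h)/√(1-q)) = y`. Moreover the map
`L_q(h) = h + √(1-q) 𝓔((κ-h)/√(1-q))` is strictly increasing with `0 < L_q'(h) < 1`
everywhere, and maps `ℝ` onto `(κ, ∞)`. -/
theorem Lq_strictMono_bijection (κ q : ℝ) (hq : q ∈ Set.Ico (0 : ℝ) 1) :
    (∀ h : ℝ, h + (1 - q) * Fq κ q h
        = h + Real.sqrt (1 - q) * gaussE ((κ - h) / Real.sqrt (1 - q))) ∧
    (∀ y : ℝ, κ < y → ∃! h : ℝ, h + (1 - q) * Fq κ q h = y) ∧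
    StrictMono (fun h : ℝ => h + Real.sqrt (1 - q) * gaussE ((κ - h) / Real.sqrt (1 - q))) ∧
    (∀ h : ℝ,
      deriv (fun h' : ℝ => h' + Real.sqrt (1 - q) * gaussE ((κ - h') / Real.sqrt (1 - q))) h
        ∈ Set.Ioo (0 : ℝ) 1) ∧
    Set.range (fun h : ℝ => h + Real.sqrt (1 - q) * gaussE ((κ - h) / Real.sqrt (1 - q)))
      = Set.Ioi κ := by
  have H := Lq_strictMono_bijection' κ q hq
  unfold Fq
  exact H
end
end

section
/- For H ∈ ℝ and A ∈ (0,∞) the following hold. If H = 0 then B_H(A) = S_H(A) = 1. For general H one has the symmetries S_H(A) = S_{−H}(A) and D_H(A) = D_{−H}(A). For H ≠ 0, the function A ↦ S_H(A) is strictly increasing on (0,∞), sandwiched by its boundary values lim_{A→0+} S_H(A) = 0 and lim_{A→∞} S_H(A) = √((1−|m|)/(1+|m|)). The function A ↦ D_H(A)/4 is also strictly increasing on (0,∞), sandwiched by its boundary values lim_{A→0+} D_H(A)/4 = −(1−|m|)²/4 and lim_{A→∞} D_H(A)/4 = (1−m²)/4; moreover D_H(1) = 0 and (D_H)′(1) =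 (1−m²)²/2. -/
open MeasureTheory Real Set Filter

noncomputable section

/-- `Δ_H(A) = √(A² + m² - (Am)²)` where `m = tanh H`. -/
def DeltaH (H A : ℝ) : ℝ := Real.sqrt (A ^ 2 + Real.tanh H ^ 2 - (A * Real.tanh H) ^ 2)

/-- `B_H(A) = A(1+m)/(Δ_H(A) - m)` where `m = tanh H`. -/
def BH (H A : ℝ) : ℝ := A * (1 + Real.tanh H) / (DeltaH H A - Real.tanh H)

/-- `S_H(A) = B_H(A)^{-sgn H}`. -/
def SH (H A : ℝ) : ℝ := BH H A ^ (-Real.sign H)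

/-- `D_H(A) = (A² - 1)(1 - m²)²/(Δ_H(A) + 1)²` where `m = tanh H`. -/
def DH (H A : ℝ) : ℝ := (A ^ 2 - 1) * (1 - Real.tanh H ^ 2) ^ 2 / (DeltaH H A + 1) ^ 2

/-- The mass function of the measure `P_{H,D}` on `{-1,+1}²` (encoded by `Bool × Bool`,
with `true` for `+1`). -/
def PHD (H D : ℝ) : Bool × Bool → ℝ := fun p =>
  match p with
  | (true, true) => ((1 + Real.tanh H) ^ 2 + D) / 4
  | (true, false) => (1 - Real.tanh H ^ 2 - D) / 4
  | (false, true) => (1 - Real.tanh H ^ 2 - D) / 4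
  | (false, false) => ((1 - Real.tanh H) ^ 2 + D) / 4

/-- `Γ(H, D)`, the Shannon entropy of `P_{H,D}`. -/
def GammaHD (H D : ℝ) : ℝ := ∑ p : Bool × Bool, Real.negMulLog (PHD H D p)

/-- The spin value of a Boolean: `+1` or `-1`. -/
def spin (b : Bool) : ℝ := if b then 1 else -1

/-- The mass function of the probability measure `Q_{A,B}` on `{-1,+1}²`, with
`a = (log A)/2`, `b = (log B)/2`. -/
def QAB (A B : ℝ) : Bool × Bool → ℝ := fun p =>
  4 * Real.exp (Real.log A / 2 * (spin p.1 * spin p.2 - 1)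
      + Real.log B / 2 * (spin p.1 + spin p.2)) / (B + 1 / B + 2 / A)

def Del (m A : ℝ) : ℝ := Real.sqrt (A ^ 2 * (1 - m ^ 2) + m ^ 2)

lemma DeltaH_eq (H A : ℝ) : DeltaH H A = Del (Real.tanh H) A := by
  unfold DeltaH Del; congr 1; ring

lemma Del_nonneg (m A : ℝ) : 0 ≤ Del m A := Real.sqrt_nonneg _

lemma Del_sq {m : ℝ} (hm : m ^ 2 < 1) (A : ℝ) : Del m A ^ 2 = A ^ 2 * (1 - m ^ 2) + m ^ 2 := by
  apply Real.sq_sqrt; nlinarith [sq_nonneg A]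

lemma Del_gt_abs {m : ℝ} (hm : m ^ 2 < 1) {A : ℝ} (hA : 0 < A) : |m| < Del m A := by
  have h1 : Real.sqrt (m ^ 2) < Del m A := by
    apply Real.sqrt_lt_sqrt (sq_nonneg m); nlinarith [sq_nonneg A, mul_pos hA hA]
  rwa [Real.sqrt_sq_eq_abs] at h1

lemma Del_lt_Del {m : ℝ} (hm : m ^ 2 < 1) {a b : ℝ} (ha : 0 ≤ a) (hab : a < b) :
    Del m a < Del m b := by
  apply Real.sqrt_lt_sqrt (by nlinarith [sq_nonneg a]); have h1 : a ^ 2 < b ^ 2 := by nlinarith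
  nlinarith [mul_lt_mul_of_pos_right h1 (show (0:ℝ) < 1 - m ^ 2 by nlinarith)]

lemma mytanh_lt_one (x : ℝ) : Real.tanh x < 1 := by
  rw [Real.tanh_eq_sinh_div_cosh]
  rw [div_lt_one (Real.cosh_pos x)]
  exact Real.sinh_lt_cosh x

lemma myneg_one_lt_tanh (x : ℝ) : -1 < Real.tanh x := by
  have := mytanh_lt_one (-x)
  rw [Real.tanh_neg] at this
  linarith

lemma mytanh_sq_lt_one (x : ℝ) : Real.tanh x ^ 2 < 1 := by
  have h1 := mytanh_lt_one x
  have h2 := myneg_one_lt_tanh x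
  nlinarith

lemma mytanh_pos {x : ℝ} (hx : 0 < x) : 0 < Real.tanh x := by
  rw [Real.tanh_eq_sinh_div_cosh]
  exact div_pos (Real.sinh_pos_iff.2 hx) (Real.cosh_pos x)

lemma DeltaH_sub_tanh_pos {H A : ℝ} (hA : 0 < A) : 0 < DeltaH H A - Real.tanh H := by
  rw [DeltaH_eq]
  have h := Del_gt_abs (mytanh_sq_lt_one H) hA
  have := le_abs_self (Real.tanh H)
  linarith

lemma BH_pos {H A : ℝ} (hA : 0 < A) : 0 < BH H A := by
  apply div_pos _ (DeltaH_sub_tanh_pos hA)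
  have := myneg_one_lt_tanh H
  nlinarith

lemma BH_neg_H {H A : ℝ} (hA : 0 < A) : BH (-H) A = (BH H A)⁻¹ := by
  set m := Real.tanh H with hm
  have hm1 : m ^ 2 < 1 := mytanh_sq_lt_one H
  have hd : DeltaH (-H) A = Del m A := by
    rw [DeltaH_eq, Real.tanh_neg]; unfold Del; congr 1; ring
  have hd2 : DeltaH H A = Del m A := DeltaH_eq H A
  have habs := Del_gt_abs hm1 hA
  have h1 : 0 < Del m A - m := by have := le_abs_self m; linarith
  have h2 : 0 < Del m A + m := by have := neg_abs_le m; linarith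
  have h3 : 0 < 1 + m := by have := myneg_one_lt_tanh H; rw [← hm] at this; linarith
  rw [BH, BH, hd, hd2, Real.tanh_neg, ← hm, sub_neg_eq_add, inv_div]
  rw [div_eq_div_iff h2.ne' (by positivity)]
  have := Del_sq hm1 A
  nlinarith [this]

lemma SH_symm {H A : ℝ} (hA : 0 < A) : SH H A = SH (-H) A := by
  unfold SH
  rw [BH_neg_H hA, Real.sign_neg, neg_neg,
    Real.inv_rpow (BH_pos hA).le, ← Real.rpow_neg (BH_pos hA).le]

def Sfun (m A : ℝ) : ℝ := A * (1 - m) / (Del m A + m)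

lemma Sfun_denom_pos {m : ℝ} (hm0 : 0 < m) (A : ℝ) : 0 < Del m A + m := by
  have := Del_nonneg m A; linarith

lemma Sfun_pos {m : ℝ} (hm0 : 0 < m) (hm1 : m < 1) {A : ℝ} (hA : 0 < A) : 0 < Sfun m A :=
  div_pos (by nlinarith) (Sfun_denom_pos hm0 A)

lemma SH_eq_Sfun_pos {H A : ℝ} (hH : 0 < H) (hA : 0 < A) : SH H A = Sfun (Real.tanh H) A := by
  set m := Real.tanh H with hmdef
  have hm0 : 0 < m := mytanh_pos hH
  have hm2 : m ^ 2 < 1 := mytanh_sq_lt_one H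
  have hm1 : m < 1 := mytanh_lt_one H
  have hd : DeltaH H A = Del m A := DeltaH_eq H A
  have habs := Del_gt_abs hm2 hA
  have h1 : 0 < Del m A - m := by have := le_abs_self m; linarith
  rw [SH, Real.sign_of_pos hH, BH, hd]
  rw [show (-(1:ℝ)) = ((-1 : ℤ) : ℝ) by norm_num, Real.rpow_intCast]
  rw [zpow_neg_one, inv_div, Sfun]
  rw [div_eq_div_iff (by nlinarith) (Sfun_denom_pos hm0 A).ne']
  nlinarith [Del_sq hm2 A]

lemma SH_eq_Sfun {H A : ℝ} (hH : H ≠ 0) (hA : 0 < A) :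
    SH H A = Sfun |Real.tanh H| A := by
  rcases hH.lt_or_gt with h | h
  · have hneg : Real.tanh H < 0 := by
      have := mytanh_pos (show 0 < -H by linarith)
      rw [Real.tanh_neg] at this; linarith
    rw [SH_symm hA, SH_eq_Sfun_pos (by linarith : (0:ℝ) < -H) hA, Real.tanh_neg,
      abs_of_neg hneg]
  · rw [SH_eq_Sfun_pos h hA, abs_of_pos (mytanh_pos h)]

lemma Sfun_strictMono {m : ℝ} (hm0 : 0 < m) (hm1 : m < 1) {a b : ℝ}
    (ha : 0 < a) (hab : a < b) : Sfun m a < Sfun m b := by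
  have hm2 : m ^ 2 < 1 := by nlinarith
  have hb : 0 < b := lt_trans ha hab
  have hsa := Del_sq hm2 a
  have hsb := Del_sq hm2 b
  have hna := Del_nonneg m a
  have hnb := Del_nonneg m b
  have key : a * Del m b < b * Del m a := by
    apply lt_of_pow_lt_pow_left₀ 2 (by positivity)
    rw [mul_pow, mul_pow, hsa, hsb]
    have h5 : a ^ 2 < b ^ 2 := by nlinarith
    nlinarith [mul_lt_mul_of_pos_left h5 (mul_pos hm0 hm0)]
  rw [Sfun, Sfun, div_lt_div_iff₀ (Sfun_denom_pos hm0 a) (Sfun_denom_pos hm0 b)]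
  have k2 : a * Del m b + a * m < b * Del m a + b * m := by nlinarith
  nlinarith [mul_lt_mul_of_pos_left k2 (show (0:ℝ) < 1 - m by linarith)]

lemma Sfun_lt_bound {m : ℝ} (hm0 : 0 < m) (hm1 : m < 1) {A : ℝ} (hA : 0 < A) :
    Sfun m A < Real.sqrt ((1 - m) / (1 + m)) := by
  have hm2 : m ^ 2 < 1 := by nlinarith
  have hs := Del_sq hm2 A
  have hn := Del_nonneg m A
  rw [show Real.sqrt ((1 - m)/(1 + m)) = Real.sqrt ((1-m)/(1+m)) from rfl]
  rw [← Real.sqrt_sq (Sfun_pos hm0 hm1 hA).le]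
  apply Real.sqrt_lt_sqrt (sq_nonneg _)
  rw [Sfun, div_pow]
  rw [div_lt_div_iff₀ (by positivity) (by linarith)]
  rw [add_sq, hs]
  have hDp : 0 < Del m A := lt_of_le_of_lt (abs_nonneg m) (Del_gt_abs hm2 hA)
  nlinarith [mul_pos (mul_pos hm0 hm0) (mul_pos hA hA), mul_pos hm0 hDp]

lemma Del_continuous (m : ℝ) : Continuous (Del m) := by
  apply Real.continuous_sqrt.comp
  continuity

lemma Sfun_tendsto_zero {m : ℝ} (hm0 : 0 < m) (hm1 : m < 1) :
    Tendsto (Sfun m) (nhdsWithin 0 (Set.Ioi 0)) (nhds 0) := by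
  have hc : ContinuousAt (Sfun m) 0 := by
    apply ContinuousAt.div
    · exact (continuous_id.mul continuous_const).continuousAt
    · exact ((Del_continuous m).add continuous_const).continuousAt
    · exact (Sfun_denom_pos hm0 0).ne'
  have h0 : Sfun m 0 = 0 := by simp [Sfun]
  have h2 : Tendsto (Sfun m) (nhdsWithin 0 (Set.Ioi 0)) (nhds (Sfun m 0)) :=
    hc.continuousWithinAt
  rwa [h0] at h2

lemma Sfun_tendsto_atTop {m : ℝ} (hm0 : 0 < m) (hm1 : m < 1) :
    Tendsto (Sfun m) atTop (nhds (Real.sqrt ((1 - m) / (1 + m)))) := by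
  have hm2 : (0:ℝ) < 1 - m ^ 2 := by nlinarith
  have hL : Real.sqrt ((1 - m) / (1 + m)) = (1 - m) / Real.sqrt (1 - m ^ 2) := by
    rw [show (1 - m) / (1 + m) = (1 - m) ^ 2 / (1 - m ^ 2) by
      rw [div_eq_div_iff (by linarith) (by linarith)]; ring]
    rw [Real.sqrt_div (sq_nonneg _), Real.sqrt_sq (by linarith)]
  have h1 : Tendsto (fun A : ℝ => m ^ 2 / A ^ 2) atTop (nhds 0) :=
    Tendsto.div_atTop tendsto_const_nhds (tendsto_pow_atTop two_ne_zero)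
  have h2 : Tendsto (fun A : ℝ => Real.sqrt (1 - m ^ 2 + m ^ 2 / A ^ 2)) atTop
      (nhds (Real.sqrt (1 - m ^ 2))) := by
    apply (Real.continuous_sqrt.tendsto _).comp
    simpa using tendsto_const_nhds.add h1
  have h3 : Tendsto (fun A : ℝ => m / A) atTop (nhds 0) :=
    Tendsto.div_atTop tendsto_const_nhds tendsto_id
  have h4 : Tendsto (fun A : ℝ => (1 - m) / (Real.sqrt (1 - m ^ 2 + m ^ 2 / A ^ 2) + m / A))
      atTop (nhds ((1 - m) / Real.sqrt (1 - m ^ 2))) := by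
    have := Tendsto.div (tendsto_const_nhds (x := (1 - m))) (h2.add h3)
      (by positivity : Real.sqrt (1 - m ^ 2) + 0 ≠ 0)
    rw [add_zero] at this; exact this
  rw [hL]
  apply h4.congr'
  filter_upwards [eventually_gt_atTop (0:ℝ)] with A hA
  have ht : (0:ℝ) ≤ 1 - m ^ 2 + m ^ 2 / A ^ 2 := by positivity
  have hDel : Del m A = A * Real.sqrt (1 - m ^ 2 + m ^ 2 / A ^ 2) := by
    rw [Del, show A ^ 2 * (1 - m ^ 2) + m ^ 2 = A ^ 2 * (1 - m ^ 2 + m ^ 2 / A ^ 2) by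
      field_simp]
    rw [Real.sqrt_mul (sq_nonneg A), Real.sqrt_sq hA.le]
  rw [Sfun, hDel]
  rw [div_eq_div_iff (by positivity) (by positivity)]
  field_simp

lemma DH_symm (H A : ℝ) : DH H A = DH (-H) A := by
  rw [DH, DH, DeltaH, DeltaH, Real.tanh_neg,
    show A ^ 2 + (-Real.tanh H) ^ 2 - (A * -Real.tanh H) ^ 2
      = A ^ 2 + Real.tanh H ^ 2 - (A * Real.tanh H) ^ 2 by ring]
  ring

lemma DeltaH_nonneg (H A : ℝ) : 0 ≤ DeltaH H A := Real.sqrt_nonneg _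

lemma DeltaH_sq (H A : ℝ) : DeltaH H A ^ 2 = A ^ 2 * (1 - Real.tanh H ^ 2) + Real.tanh H ^ 2 := by
  rw [DeltaH_eq]; exact Del_sq (mytanh_sq_lt_one H) A

lemma DH_alt (H A : ℝ) :
    DH H A = (1 - Real.tanh H ^ 2) * (DeltaH H A - 1) / (DeltaH H A + 1) := by
  have h0 : (0:ℝ) < DeltaH H A + 1 := by have := DeltaH_nonneg H A; linarith
  rw [DH, div_eq_div_iff (by positivity) h0.ne']
  linear_combination (-(1 - Real.tanh H ^ 2) * (DeltaH H A + 1)) * DeltaH_sq H A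

lemma DH_mono (H : ℝ) {a b : ℝ} (ha : 0 < a) (hab : a < b) : DH H a < DH H b := by
  set m := Real.tanh H
  have hm2 : m ^ 2 < 1 := mytanh_sq_lt_one H
  have hd : DeltaH H a < DeltaH H b := by
    rw [DeltaH_eq, DeltaH_eq]; exact Del_lt_Del hm2 ha.le hab
  have h1 := DeltaH_nonneg H a
  have h2 := DeltaH_nonneg H b
  rw [DH_alt, DH_alt, div_lt_div_iff₀ (by linarith) (by linarith)]
  nlinarith

lemma DeltaH_continuous (H : ℝ) : Continuous (DeltaH H) := by
  rw [show DeltaH H = Del (Real.tanh H) from funext (DeltaH_eq H)]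
  exact Del_continuous _

lemma DeltaH_zero (H : ℝ) : DeltaH H 0 = |Real.tanh H| := by
  rw [DeltaH, show (0:ℝ) ^ 2 + Real.tanh H ^ 2 - (0 * Real.tanh H) ^ 2 = Real.tanh H ^ 2 by ring,
    Real.sqrt_sq_eq_abs]

lemma DH_zero (H : ℝ) : DH H 0 = -(1 - |Real.tanh H|) ^ 2 := by
  rw [DH, DeltaH_zero]
  have h0 : (0:ℝ) < |Real.tanh H| + 1 := by positivity
  rw [div_eq_iff (by positivity)]
  rcases abs_cases (Real.tanh H) with ⟨he, _⟩ | ⟨he, _⟩ <;> rw [he] <;> ring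

lemma DH_tendsto_zero (H : ℝ) :
    Tendsto (fun A' => DH H A' / 4) (nhdsWithin 0 (Set.Ioi 0))
      (nhds (-(1 - |Real.tanh H|) ^ 2 / 4)) := by
  have hc : ContinuousAt (fun A' => DH H A' / 4) 0 := by
    apply ContinuousAt.div_const
    apply ContinuousAt.div
    · exact (by continuity : Continuous fun A' : ℝ => (A' ^ 2 - 1) * (1 - Real.tanh H ^ 2) ^ 2).continuousAt
    · exact (((DeltaH_continuous H).add continuous_const).pow 2).continuousAt
    · rw [DeltaH_zero]; positivity
  have h2 : Tendsto (fun A' => DH H A' / 4) (nhdsWithin 0 (Set.Ioi 0)) (nhds (DH H 0 / 4)) :=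
    hc.continuousWithinAt
  rwa [DH_zero] at h2

lemma DeltaH_tendsto_atTop (H : ℝ) : Tendsto (DeltaH H) atTop atTop := by
  rw [show DeltaH H = Del (Real.tanh H) from funext (DeltaH_eq H)]
  have hm2 : Real.tanh H ^ 2 < 1 := mytanh_sq_lt_one H
  have hs : Tendsto Real.sqrt atTop atTop := by
    apply tendsto_atTop_atTop.2
    intro b
    refine ⟨max b 0 ^ 2, fun x hx => ?_⟩
    have h1 : Real.sqrt (max b 0 ^ 2) ≤ Real.sqrt x := Real.sqrt_le_sqrt hx
    rw [Real.sqrt_sq (le_max_right b 0)] at h1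
    exact le_trans (le_max_left b 0) h1
  apply hs.comp
  apply tendsto_atTop_add_const_right
  exact (tendsto_pow_atTop two_ne_zero).atTop_mul_const (by linarith)

lemma ratio_tendsto : Tendsto (fun t : ℝ => (t - 1) / (t + 1)) atTop (nhds 1) := by
  have h1 : Tendsto (fun t : ℝ => 2 / (t + 1)) atTop (nhds 0) :=
    Tendsto.div_atTop tendsto_const_nhds (tendsto_atTop_add_const_right _ 1 tendsto_id)
  have h2 := tendsto_const_nhds (x := (1:ℝ)) (f := atTop) |>.sub h1
  rw [sub_zero] at h2
  apply h2.congr'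
  filter_upwards [eventually_gt_atTop (0:ℝ)] with t ht
  field_simp
  ring

lemma DH_tendsto_atTop (H : ℝ) :
    Tendsto (fun A' => DH H A' / 4) atTop (nhds ((1 - Real.tanh H ^ 2) / 4)) := by
  have h1 : Tendsto (fun A' => (1 - Real.tanh H ^ 2) *
      ((DeltaH H A' - 1) / (DeltaH H A' + 1)) / 4) atTop
      (nhds ((1 - Real.tanh H ^ 2) * 1 / 4)) :=
    ((ratio_tendsto.comp (DeltaH_tendsto_atTop H)).const_mul _).div_const _
  rw [mul_one] at h1
  apply h1.congr
  intro A
  rw [DH_alt]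
  ring

lemma DH_mem (H : ℝ) {A : ℝ} (hA : 0 < A) :
    DH H A ∈ Set.Ioo (-(1 - |Real.tanh H|) ^ 2) (1 - Real.tanh H ^ 2) := by
  set m := Real.tanh H
  have hm2 : m ^ 2 < 1 := mytanh_sq_lt_one H
  set t := |m| with htdef
  have ht2 : t ^ 2 = m ^ 2 := sq_abs m
  have ht0 : 0 ≤ t := abs_nonneg m
  have ht1 : t < 1 := by nlinarith
  have hΔ : t < DeltaH H A := by rw [DeltaH_eq]; exact Del_gt_abs hm2 hA
  have h1 : (0:ℝ) < DeltaH H A + 1 := by linarith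
  constructor
  · rw [DH_alt, lt_div_iff₀ h1]
    nlinarith [mul_pos (show (0:ℝ) < 1 - t by linarith) (show (0:ℝ) < DeltaH H A - t by linarith)]
  · rw [DH_alt, div_lt_iff₀ h1]
    nlinarith

lemma DH_one (H : ℝ) : DH H 1 = 0 := by
  rw [DH]; norm_num

lemma DeltaH_one (H : ℝ) : DeltaH H 1 = 1 := by
  rw [DeltaH, show (1:ℝ) ^ 2 + Real.tanh H ^ 2 - (1 * Real.tanh H) ^ 2 = 1 by ring,
    Real.sqrt_one]

lemma DH_deriv (H : ℝ) : deriv (DH H) 1 = (1 - Real.tanh H ^ 2) ^ 2 / 2 := by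
  set m := Real.tanh H with hm
  have hg : HasDerivAt (fun A : ℝ => A ^ 2 + m ^ 2 - (A * m) ^ 2) (2 - 2 * m ^ 2) 1 := by
    have h := ((hasDerivAt_pow 2 (1:ℝ)).add_const (m ^ 2)).sub
      (((hasDerivAt_id (1:ℝ)).mul_const m).pow 2)
    refine h.congr_deriv ?_
    norm_num
    ring
  have hgval : (1:ℝ) ^ 2 + m ^ 2 - (1 * m) ^ 2 = 1 := by ring
  have hΔ : HasDerivAt (DeltaH H) ((2 - 2 * m ^ 2) / (2 * Real.sqrt 1)) 1 := by
    have := hg.sqrt (by rw [hgval]; norm_num)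
    rw [hgval] at this
    exact this
  have hnum : HasDerivAt (fun A : ℝ => (A ^ 2 - 1) * (1 - m ^ 2) ^ 2)
      (2 * (1 - m ^ 2) ^ 2) 1 := by
    have h := ((hasDerivAt_pow 2 (1:ℝ)).sub_const 1).mul_const ((1 - m ^ 2) ^ 2)
    refine h.congr_deriv ?_
    norm_num
  have hden : HasDerivAt (fun A : ℝ => (DeltaH H A + 1) ^ 2)
      (2 * (DeltaH H 1 + 1) ^ 1 * ((2 - 2 * m ^ 2) / (2 * Real.sqrt 1))) 1 :=
    (hΔ.add_const 1).pow 2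
  have hD : HasDerivAt (DH H) _ 1 := hnum.div hden (by rw [DeltaH_one]; norm_num)
  rw [hD.deriv]
  rw [DeltaH_one, Real.sqrt_one]
  field_simp
  ring

/-- Lemma 6.4(a). Properties of `B_H`, `S_H`, `D_H` on `A ∈ (0,∞)`:
if `H = 0` then `B_H(A) = S_H(A) = 1`; the symmetries `S_H = S_{-H}` and `D_H = D_{-H}`;
for `H ≠ 0`, `A ↦ S_H(A)` is strictly increasing on `(0,∞)`, sandwiched by its boundary
values `0` (as `A → 0⁺`) and `√((1-|m|)/(1+|m|))` (as `A → ∞`); `A ↦ D_H(A)/4` is strictly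
increasing on `(0,∞)`, sandwiched by `-(1-|m|)²/4` and `(1-m²)/4`; and `D_H(1) = 0` with
`(D_H)'(1) = (1-m²)²/2`. -/
theorem SH_DH_properties (H A : ℝ) (hA : 0 < A) :
    (H = 0 → BH H A = 1 ∧ SH H A = 1) ∧
    SH H A = SH (-H) A ∧
    DH H A = DH (-H) A ∧
    (H ≠ 0 →
      StrictMonoOn (SH H) (Set.Ioi 0) ∧
      Filter.Tendsto (SH H) (nhdsWithin 0 (Set.Ioi 0)) (nhds 0) ∧
      Filter.Tendsto (SH H) Filter.atTop
        (nhds (Real.sqrt ((1 - |Real.tanh H|) / (1 + |Real.tanh H|)))) ∧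
      SH H A ∈ Set.Ioo 0 (Real.sqrt ((1 - |Real.tanh H|) / (1 + |Real.tanh H|)))) ∧
    StrictMonoOn (fun A' => DH H A' / 4) (Set.Ioi 0) ∧
    Filter.Tendsto (fun A' => DH H A' / 4) (nhdsWithin 0 (Set.Ioi 0))
      (nhds (-(1 - |Real.tanh H|) ^ 2 / 4)) ∧
    Filter.Tendsto (fun A' => DH H A' / 4) Filter.atTop
      (nhds ((1 - Real.tanh H ^ 2) / 4)) ∧
    DH H A / 4 ∈ Set.Ioo (-(1 - |Real.tanh H|) ^ 2 / 4) ((1 - Real.tanh H ^ 2) / 4) ∧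
    DH H 1 = 0 ∧
    deriv (DH H) 1 = (1 - Real.tanh H ^ 2) ^ 2 / 2 := by
  have hA' : A ∈ Set.Ioi (0:ℝ) := hA
  refine ⟨?_, SH_symm hA, DH_symm H A, ?_, ?_, DH_tendsto_zero H, DH_tendsto_atTop H, ?_, DH_one H, DH_deriv H⟩
  · intro h0
    subst h0
    have hD : DeltaH 0 A = A := by
      rw [DeltaH, Real.tanh_zero,
        show A ^ 2 + (0:ℝ) ^ 2 - (A * 0) ^ 2 = A ^ 2 by ring, Real.sqrt_sq hA.le]
    have hB : BH 0 A = 1 := by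
      rw [BH, hD, Real.tanh_zero]
      rw [add_zero, sub_zero, mul_one, div_self hA.ne']
    refine ⟨hB, ?_⟩
    rw [SH, hB, Real.one_rpow]
  · intro hH
    have htne : Real.tanh H ≠ 0 := by
      rcases hH.lt_or_gt with h | h
      · have := mytanh_pos (show 0 < -H by linarith)
        rw [Real.tanh_neg] at this; linarith
      · exact (mytanh_pos h).ne'
    have hμ0 : 0 < |Real.tanh H| := abs_pos.2 htne
    have hμ1 : |Real.tanh H| < 1 := abs_lt.2 ⟨myneg_one_lt_tanh H, mytanh_lt_one H⟩
    refine ⟨?_, ?_, ?_, ?_, ?_⟩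
    · intro a ha b hb hab
      rw [SH_eq_Sfun hH (Set.mem_Ioi.1 ha), SH_eq_Sfun hH (Set.mem_Ioi.1 hb)]
      exact Sfun_strictMono hμ0 hμ1 (Set.mem_Ioi.1 ha) hab
    · apply (Sfun_tendsto_zero hμ0 hμ1).congr'
      exact Filter.eventuallyEq_of_mem self_mem_nhdsWithin
        fun A' hA' => (SH_eq_Sfun hH hA').symm
    · apply (Sfun_tendsto_atTop hμ0 hμ1).congr'
      filter_upwards [eventually_gt_atTop (0:ℝ)] with A' hA'
      exact (SH_eq_Sfun hH hA').symm
    · rw [SH_eq_Sfun hH hA]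
      exact Sfun_pos hμ0 hμ1 hA
    · rw [SH_eq_Sfun hH hA]
      exact Sfun_lt_bound hμ0 hμ1 hA
  · intro a ha b hb hab
    have := DH_mono H (Set.mem_Ioi.1 ha) hab
    simp only []
    linarith
  · have h := DH_mem H hA
    exact ⟨by have := h.1; linarith, by have := h.2; linarith⟩
end
end
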